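/- Let p be an odd prime and A the F_p-subalgebra of F_p[x1,x2,y1,y2] generated by {x1x2, y1y2, x1y1, x2y2} ∪ {x1^{p−1−i}y2^i, x2^{p−1−i}y1^i : 0 ≤ i ≤ p−1}. Then every monomial x1^u x2^v y1^s y2^t with u+t ≡ v+s (mod p−1) lies in A. -/
import Mathlib


open MvPolynomial

theorem stmt_16 {p : ℕ} (hp : p.Prime) (hodd : Odd p) (u v s t : ℕ)
    (h : u + t ≡ v + s [MOD p - 1]) :
    (X 0 ^ u * X 1 ^ v * X 2 ^ s * X 3 ^ t : MvPolynomial (Fin 4) (ZMod p)) ∈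
      Algebra.adjoin (ZMod p)
        ({X 0 * X 1, X 2 * X 3, X 0 * X 2, X 1 * X 3} ∪
          {f : MvPolynomial (Fin 4) (ZMod p) | ∃ i ≤ p - 1,
            f = X 0 ^ (p - 1 - i) * X 3 ^ i ∨ f = X 1 ^ (p - 1 - i) * X 2 ^ i}) := by
  have hp3 : 3 ≤ p := by
    rcases hodd with ⟨k, hk⟩
    have h2 := hp.two_le
    omega
  have hq : 0 < p - 1 := by omega
  suffices H : ∀ n u v s t : ℕ, u + v + s + t = n →
      u + t ≡ v + s [MOD p - 1] →
      (X 0 ^ u * X 1 ^ v * X 2 ^ s * X 3 ^ t : MvPolynomial (Fin 4) (ZMod p)) ∈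
      Algebra.adjoin (ZMod p)
        ({X 0 * X 1, X 2 * X 3, X 0 * X 2, X 1 * X 3} ∪
          {f : MvPolynomial (Fin 4) (ZMod p) | ∃ i ≤ p - 1,
            f = X 0 ^ (p - 1 - i) * X 3 ^ i ∨ f = X 1 ^ (p - 1 - i) * X 2 ^ i}) by
    exact H _ u v s t rfl h
  intro n
  induction n using Nat.strong_induction_on with
  | _ n ih =>
  intro u v s t hn h
  by_cases huv : 1 ≤ u ∧ 1 ≤ v
  · obtain ⟨u', rfl⟩ : ∃ u', u = u' + 1 := ⟨u - 1, by omega⟩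
    obtain ⟨v', rfl⟩ : ∃ v', v = v' + 1 := ⟨v - 1, by omega⟩
    rw [show (X 0 ^ (u' + 1) * X 1 ^ (v' + 1) * X 2 ^ s * X 3 ^ t
        : MvPolynomial (Fin 4) (ZMod p)) =
        (X 0 * X 1) * (X 0 ^ u' * X 1 ^ v' * X 2 ^ s * X 3 ^ t) by ring]
    refine mul_mem (Algebra.subset_adjoin (Or.inl ?_)) (ih (u' + v' + s + t) (by omega)
      u' v' s t rfl ?_)
    · simp
    · have h' : u' + t + 1 ≡ v' + s + 1 [MOD p - 1] := by
        rw [show u' + t + 1 = u' + 1 + t from by ring,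
          show v' + s + 1 = v' + 1 + s from by ring]
        exact h
      exact Nat.ModEq.add_right_cancel' 1 h'
  by_cases hst : 1 ≤ s ∧ 1 ≤ t
  · obtain ⟨s', rfl⟩ : ∃ s', s = s' + 1 := ⟨s - 1, by omega⟩
    obtain ⟨t', rfl⟩ : ∃ t', t = t' + 1 := ⟨t - 1, by omega⟩
    rw [show (X 0 ^ u * X 1 ^ v * X 2 ^ (s' + 1) * X 3 ^ (t' + 1)
        : MvPolynomial (Fin 4) (ZMod p)) =
        (X 2 * X 3) * (X 0 ^ u * X 1 ^ v * X 2 ^ s' * X 3 ^ t') by ring]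
    refine mul_mem (Algebra.subset_adjoin (Or.inl ?_)) (ih (u + v + s' + t') (by omega)
      u v s' t' rfl ?_)
    · simp
    · have h' : u + t' + 1 ≡ v + s' + 1 [MOD p - 1] := by
        rw [show u + t' + 1 = u + (t' + 1) from by ring,
          show v + s' + 1 = v + (s' + 1) from by ring]
        exact h
      exact Nat.ModEq.add_right_cancel' 1 h'
  by_cases hus : 1 ≤ u ∧ 1 ≤ s
  · obtain ⟨u', rfl⟩ : ∃ u', u = u' + 1 := ⟨u - 1, by omega⟩
    obtain ⟨s', rfl⟩ : ∃ s', s = s' + 1 := ⟨s - 1, by omega⟩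
    rw [show (X 0 ^ (u' + 1) * X 1 ^ v * X 2 ^ (s' + 1) * X 3 ^ t
        : MvPolynomial (Fin 4) (ZMod p)) =
        (X 0 * X 2) * (X 0 ^ u' * X 1 ^ v * X 2 ^ s' * X 3 ^ t) by ring]
    refine mul_mem (Algebra.subset_adjoin (Or.inl ?_)) (ih (u' + v + s' + t) (by omega)
      u' v s' t rfl ?_)
    · simp
    · have h' : u' + t + 1 ≡ v + s' + 1 [MOD p - 1] := by
        rw [show u' + t + 1 = u' + 1 + t from by ring,
          show v + s' + 1 = v + (s' + 1) from by ring]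
        exact h
      exact Nat.ModEq.add_right_cancel' 1 h'
  by_cases hvt : 1 ≤ v ∧ 1 ≤ t
  · obtain ⟨v', rfl⟩ : ∃ v', v = v' + 1 := ⟨v - 1, by omega⟩
    obtain ⟨t', rfl⟩ : ∃ t', t = t' + 1 := ⟨t - 1, by omega⟩
    rw [show (X 0 ^ u * X 1 ^ (v' + 1) * X 2 ^ s * X 3 ^ (t' + 1)
        : MvPolynomial (Fin 4) (ZMod p)) =
        (X 1 * X 3) * (X 0 ^ u * X 1 ^ v' * X 2 ^ s * X 3 ^ t') by ring]
    refine mul_mem (Algebra.subset_adjoin (Or.inl ?_)) (ih (u + v' + s + t') (by omega)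
      u v' s t' rfl ?_)
    · simp
    · have h' : u + t' + 1 ≡ v' + s + 1 [MOD p - 1] := by
        rw [show u + t' + 1 = u + (t' + 1) from by ring,
          show v' + s + 1 = v' + 1 + s from by ring]
        exact h
      exact Nat.ModEq.add_right_cancel' 1 h'
  -- now at most "opposite" pairs: v = s = 0 or u = t = 0 (or everything zero)
  by_cases hzero : u = 0 ∧ v = 0 ∧ s = 0 ∧ t = 0
  · obtain ⟨rfl, rfl, rfl, rfl⟩ := hzero
    simpa using one_mem (Algebra.adjoin (ZMod p) _)
  by_cases hvs : v = 0 ∧ s = 0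
  · obtain ⟨rfl, rfl⟩ := hvs
    have hdvd : (p - 1) ∣ (u + t) := (Nat.modEq_zero_iff_dvd).mp (by simpa using h)
    have hpos : 0 < u + t := by omega
    have hle : p - 1 ≤ u + t := Nat.le_of_dvd hpos hdvd
    obtain ⟨a, b, ha, hb, hab⟩ : ∃ a b, a ≤ u ∧ b ≤ t ∧ a + b = p - 1 :=
      ⟨min u (p - 1), p - 1 - min u (p - 1), by omega, by omega, by omega⟩
    obtain ⟨u', rfl⟩ : ∃ u', u = u' + a := ⟨u - a, by omega⟩
    obtain ⟨t', rfl⟩ : ∃ t', t = t' + b := ⟨t - b, by omega⟩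
    rw [show (X 0 ^ (u' + a) * X 1 ^ 0 * X 2 ^ 0 * X 3 ^ (t' + b)
        : MvPolynomial (Fin 4) (ZMod p)) =
        (X 0 ^ a * X 3 ^ b) * (X 0 ^ u' * X 1 ^ 0 * X 2 ^ 0 * X 3 ^ t') by ring]
    refine mul_mem (Algebra.subset_adjoin (Or.inr ⟨b, by omega, Or.inl ?_⟩))
      (ih (u' + 0 + 0 + t') (by omega) u' 0 0 t' rfl ?_)
    · rw [show p - 1 - b = a by omega]
    · have hd : (p - 1) ∣ (u' + t') := by
        have he : u' + t' = (u' + a + (t' + b)) - (p - 1) := by omega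
        rw [he]
        exact Nat.dvd_sub hdvd dvd_rfl
      simpa using (Nat.modEq_zero_iff_dvd).mpr hd
  · -- then u = 0 and t = 0
    have hut : u = 0 ∧ t = 0 := by
      constructor <;> by_contra hc <;> omega
    obtain ⟨rfl, rfl⟩ := hut
    have hdvd : (p - 1) ∣ (v + s) := (Nat.modEq_zero_iff_dvd).mp (by simpa using h.symm)
    have hpos : 0 < v + s := by omega
    have hle : p - 1 ≤ v + s := Nat.le_of_dvd hpos hdvd
    obtain ⟨a, b, ha, hb, hab⟩ : ∃ a b, a ≤ v ∧ b ≤ s ∧ a + b = p - 1 :=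
      ⟨min v (p - 1), p - 1 - min v (p - 1), by omega, by omega, by omega⟩
    obtain ⟨v', rfl⟩ : ∃ v', v = v' + a := ⟨v - a, by omega⟩
    obtain ⟨s', rfl⟩ : ∃ s', s = s' + b := ⟨s - b, by omega⟩
    rw [show (X 0 ^ 0 * X 1 ^ (v' + a) * X 2 ^ (s' + b) * X 3 ^ 0
        : MvPolynomial (Fin 4) (ZMod p)) =
        (X 1 ^ a * X 2 ^ b) * (X 0 ^ 0 * X 1 ^ v' * X 2 ^ s' * X 3 ^ 0) by ring]
    refine mul_mem (Algebra.subset_adjoin (Or.inr ⟨b, by omega, Or.inr ?_⟩))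
      (ih (0 + v' + s' + 0) (by omega) 0 v' s' 0 rfl ?_)
    · rw [show p - 1 - b = a by omega]
    · have hd : (p - 1) ∣ (v' + s') := by
        have he : v' + s' = (v' + a + (s' + b)) - (p - 1) := by omega
        rw [he]
        exact Nat.dvd_sub hdvd dvd_rfl
      simpa using ((Nat.modEq_zero_iff_dvd).mpr hd).symm
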